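/- Let ν be a Lévy measure with ∫_{|x|≤1} |x|^{α₊} ν(dx) < ∞ for some α₊ ∈ (0,2) and ∫_{|x|>1} e^{(R+1)x} ν(dx) < ∞. Define Υ(u) := (1/Ā) ∫_ℝ (e^{(R−iu)x} − 1)(e^x − 1) ν(dx) where Ā := ∫_ℝ (e^x−1)² ν(dx) ∈ (0,∞). Then there exists C > 0 such that |Υ(u)| ≤ C(1 + |u|^{α₊−1}) for all real u (with the convention that for α₊ ≤ 1 the bound reads |Υ(u)| ≤ C). -/

import Mathlib

open MeasureTheory

lemma aux_exp_abs (y : ℝ) : |Real.exp y - 1| ≤ |y| * Real.exp |y| := by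
  rcases le_or_gt 0 y with hy | hy
  · rw [abs_of_nonneg (by nlinarith [Real.add_one_le_exp y] : (0:ℝ) ≤ Real.exp y - 1),
      abs_of_nonneg hy]
    have key : Real.exp y * Real.exp (-y) = 1 := by rw [← Real.exp_add]; simp
    nlinarith [mul_le_mul_of_nonneg_left (Real.add_one_le_exp (-y)) (Real.exp_pos y).le, key]
  · rw [abs_of_nonpos (by nlinarith [Real.exp_lt_one_iff.mpr hy] : Real.exp y - 1 ≤ 0),
      abs_of_neg hy]
    nlinarith [Real.add_one_le_exp y, Real.one_le_exp (by linarith : (0:ℝ) ≤ -y)]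

lemma aux_circle (t : ℝ) : ‖Complex.exp (Complex.I * t) - 1‖ ≤ min 2 (2 * |t|) := by
  have habs : ‖Complex.exp (Complex.I * t)‖ = 1 := by
    rw [Complex.norm_exp]; simp
  have h2 : ‖Complex.exp (Complex.I * t) - 1‖ ≤ 2 := by
    calc ‖Complex.exp (Complex.I * t) - 1‖
        ≤ ‖Complex.exp (Complex.I * t)‖ + ‖(1:ℂ)‖ :=
          norm_sub_le _ _
      _ = 2 := by rw [habs]; simp; norm_num
  refine le_min h2 ?_
  rcases le_or_gt |t| 1 with ht | ht
  · have := Complex.norm_exp_sub_one_le (x := Complex.I * t) (by simpa using ht)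
    simpa using this
  · calc ‖Complex.exp (Complex.I * t) - 1‖ ≤ 2 := h2
      _ ≤ 2 * |t| := by nlinarith

lemma aux_min_rpow (t β : ℝ) (ht : 0 ≤ t) (hβ0 : 0 < β) (hβ1 : β ≤ 1) :
    min 2 (2 * t) ≤ 2 * t ^ β := by
  rcases le_or_gt t 1 with h | h
  · rcases eq_or_lt_of_le ht with h0 | h0
    · simp [← h0, Real.zero_rpow hβ0.ne']
    · calc min 2 (2*t) ≤ 2 * t := min_le_right _ _
        _ = 2 * t ^ (1:ℝ) := by rw [Real.rpow_one]
        _ ≤ 2 * t ^ β := by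
            have := Real.rpow_le_rpow_of_exponent_ge h0 h hβ1
            linarith
  · calc min 2 (2*t) ≤ 2 := min_le_left _ _
      _ ≤ 2 * t ^ β := by
          have : (1:ℝ) ≤ t ^ β := by
            calc (1:ℝ) = 1 ^ β := (Real.one_rpow β).symm
              _ ≤ t ^ β := Real.rpow_le_rpow zero_le_one h.le hβ0.le
          linarith

lemma aux_rpow_mono {a p q : ℝ} (ha0 : 0 ≤ a) (ha1 : a ≤ 1) (hp : 0 < p) (hpq : p ≤ q) :
    a ^ q ≤ a ^ p := by
  rcases eq_or_lt_of_le ha0 with h0 | h0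
  · rw [← h0, Real.zero_rpow hp.ne', Real.zero_rpow (by linarith : q ≠ 0)]
  · exact Real.rpow_le_rpow_of_exponent_ge h0 ha1 hpq

lemma aux_decomp (R u x : ℝ) :
    ‖Complex.exp (((R:ℂ) - Complex.I * u) * x) - 1‖
      ≤ Real.exp (R * x) * min 2 (2 * (|u| * |x|)) + |Real.exp (R * x) - 1| := by
  have h1 : ((R:ℂ) - Complex.I * u) * x
      = ((R*x : ℝ) : ℂ) + Complex.I * ((-(u*x) : ℝ) : ℂ) := by push_cast; ring
  rw [h1, Complex.exp_add]
  have h2 : Complex.exp ((R*x:ℝ):ℂ) * Complex.exp (Complex.I * ((-(u*x):ℝ):ℂ)) - 1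
      = Complex.exp ((R*x:ℝ):ℂ) * (Complex.exp (Complex.I * ((-(u*x):ℝ):ℂ)) - 1)
        + (Complex.exp ((R*x:ℝ):ℂ) - 1) := by ring
  rw [h2]
  refine (norm_add_le _ _).trans ?_
  have hA : ‖Complex.exp ((R*x:ℝ):ℂ)‖ = Real.exp (R*x) := by
    rw [Complex.norm_exp]; simp
  have hB : ‖Complex.exp ((R*x:ℝ):ℂ) - 1‖ = |Real.exp (R*x) - 1| := by
    rw [← Complex.ofReal_exp]
    rw [show ((Real.exp (R*x) : ℝ) : ℂ) - 1 = ((Real.exp (R*x) - 1 : ℝ) : ℂ) by push_cast; ring]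
    exact Complex.norm_real _
  rw [norm_mul, hA, hB]
  gcongr
  have := aux_circle (-(u*x))
  calc ‖Complex.exp (Complex.I * ((-(u*x):ℝ):ℂ)) - 1‖
      ≤ min 2 (2 * |-(u*x)|) := this
    _ = min 2 (2 * (|u| * |x|)) := by rw [abs_neg, abs_mul]

lemma aux_abs2 (x : ℝ) :
    ‖Complex.exp (x:ℂ) - 1‖ = |Real.exp x - 1| := by
  rw [← Complex.ofReal_exp]
  rw [show ((Real.exp x : ℝ) : ℂ) - 1 = ((Real.exp x - 1 : ℝ) : ℂ) by push_cast; ring]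
  exact Complex.norm_real _

lemma aux_re (R u x : ℝ) :
    ‖Complex.exp (((R:ℂ) - Complex.I * u) * x)‖ = Real.exp (R*x) := by
  rw [Complex.norm_exp]
  congr 1
  simp [Complex.mul_re, Complex.sub_re, Complex.sub_im, Complex.mul_im]

set_option maxHeartbeats 1000000 in
/-- Bound on `Υ(u) = (1/Ā)∫(e^{(R−iu)x} − 1)(e^x − 1) ν(dx)`:
`|Υ(u)| ≤ C(1+|u|^{α₊−1})` (and `|Υ(u)| ≤ C` when `α₊ ≤ 1`). -/
theorem stmt14 (R αp : ℝ) (hαp : αp ∈ Set.Ioo (0:ℝ) 2) (ν : Measure ℝ) (hν0 : ν {0} = 0)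
    (hmin : Integrable (fun x => min (x ^ 2) 1) ν)
    (hsmall : Integrable (fun x => |x| ^ αp) (ν.restrict {x : ℝ | |x| ≤ 1}))
    (hbig : Integrable (fun x => Real.exp ((R + 1) * x)) (ν.restrict {x : ℝ | 1 < |x|}))
    (A : ℝ) (hAint : Integrable (fun x => (Real.exp x - 1) ^ 2) ν)
    (hA : A = ∫ x, (Real.exp x - 1) ^ 2 ∂ν) (hApos : 0 < A)
    (Υ : ℝ → ℂ)
    (hΥ : ∀ u : ℝ, Υ u = ((1 / A : ℝ) : ℂ) *
      ∫ x : ℝ, (Complex.exp (((R : ℂ) - Complex.I * u) * x) - 1) *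
        (Complex.exp (x : ℂ) - 1) ∂ν) :
    ∃ C > (0:ℝ), ∀ u : ℝ,
      ‖Υ u‖ ≤ if αp ≤ 1 then C else C * (1 + |u| ^ (αp - 1)) := by
  obtain ⟨hαp0, hαp2⟩ := hαp
  set S : Set ℝ := {x : ℝ | |x| ≤ 1} with hSdef
  set T : Set ℝ := {x : ℝ | 1 < |x|} with hTdef
  have hSmeas : MeasurableSet S := (isClosed_le continuous_abs continuous_const).measurableSet
  have hTmeas : MeasurableSet T := (isOpen_lt continuous_const continuous_abs).measurableSet
  have hdisj : Disjoint S T := by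
    rw [Set.disjoint_left]
    intro x hx hx'
    simp only [hSdef, Set.mem_setOf_eq] at hx
    simp only [hTdef, Set.mem_setOf_eq] at hx'
    exact absurd hx' (not_lt.2 hx)
  have hST : S ∪ T = Set.univ := by
    ext x
    simp only [hSdef, hTdef, Set.mem_union, Set.mem_setOf_eq, Set.mem_univ, iff_true]
    exact le_or_gt |x| 1
  set f : ℝ → ℝ → ℂ := fun u x =>
    (Complex.exp (((R : ℂ) - Complex.I * u) * x) - 1) * (Complex.exp (x:ℂ) - 1) with hfdef
  set g : ℝ → ℝ := fun x => |Real.exp (R*x) - 1| * |Real.exp x - 1| with hgdef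
  have hfcont : ∀ u, Continuous (f u) := by
    intro u; rw [hfdef]; fun_prop
  have hgcont : Continuous g := by rw [hgdef]; fun_prop
  have hg0 : ∀ x, 0 ≤ g x := fun x => mul_nonneg (abs_nonneg _) (abs_nonneg _)
  have hnorm : ∀ u x, ‖f u x‖ = ‖f u x‖ := fun u x => rfl
  -- lower bound by g
  have hlow : ∀ u x, g x ≤ ‖f u x‖ := by
    intro u x
    rw [hfdef]
    simp only [norm_mul, aux_abs2]
    refine mul_le_mul_of_nonneg_right ?_ (abs_nonneg _)
    have h1 := abs_norm_sub_norm_le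
      (Complex.exp (((R:ℂ) - Complex.I * u) * x)) 1
    rw [aux_re, norm_one] at h1
    exact h1
  -- upper bound on big region
  have hupT : ∀ u x, ‖f u x‖ ≤ g x + 2*((Real.exp x - 1)^2 + 1) := by
    intro u x
    rw [hfdef]
    simp only [norm_mul, aux_abs2]
    have h1 : ‖Complex.exp (((R:ℂ) - Complex.I * u) * x) - 1‖
        ≤ |Real.exp (R*x) - 1| + 2 := by
      calc ‖Complex.exp (((R:ℂ) - Complex.I * u) * x) - 1‖
          ≤ ‖Complex.exp (((R:ℂ) - Complex.I * u) * x)‖ + ‖(1:ℂ)‖ :=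
            norm_sub_le _ _
        _ = Real.exp (R*x) + 1 := by rw [aux_re, norm_one]
        _ ≤ |Real.exp (R*x) - 1| + 2 := by
            cases abs_cases (Real.exp (R*x) - 1) with
            | inl h => linarith [h.1]
            | inr h => linarith [h.1, (Real.exp_pos (R*x)).le]
    calc ‖Complex.exp (((R:ℂ) - Complex.I * u) * x) - 1‖ * |Real.exp x - 1|
        ≤ (|Real.exp (R*x) - 1| + 2) * |Real.exp x - 1| :=
          mul_le_mul_of_nonneg_right h1 (abs_nonneg _)
      _ = g x + 2 * |Real.exp x - 1| := by rw [hgdef]; ring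
      _ ≤ g x + 2*((Real.exp x - 1)^2 + 1) := by
          have : |Real.exp x - 1| ≤ (Real.exp x - 1)^2 + 1 := by
            nlinarith [sq_nonneg (|Real.exp x - 1| - 1), sq_abs (Real.exp x - 1)]
          linarith
  -- T has finite measure
  have hνT : ν T < ⊤ := by
    have h1 : T ⊆ {x : ℝ | 1 ≤ min (x^2) 1} := by
      intro x hx
      simp only [hTdef, Set.mem_setOf_eq] at hx ⊢
      have hx2 : (1:ℝ) ≤ x^2 := by nlinarith [sq_abs x]
      exact le_min hx2 le_rfl
    exact (measure_mono h1).trans_lt (hmin.measure_ge_lt_top one_pos)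
  set K : ℝ := Real.exp |R| * Real.exp 1 * (2 + |R|) with hKdef
  have hKpos : 0 < K := by positivity
  set B : ℝ → ℝ := fun u => if αp ≤ 1 then 1 else 1 + |u| ^ (αp-1) with hBdef
  have hB1 : ∀ u, 1 ≤ B u := by
    intro u; rw [hBdef]; dsimp only; split_ifs
    · exact le_rfl
    · nlinarith [Real.rpow_nonneg (abs_nonneg u) (αp-1)]
  -- small region pointwise bound
  have hupS : ∀ u : ℝ, ∀ x ∈ S, ‖f u x‖ ≤ K * B u * |x| ^ αp := by
    intro u x hx
    have hx1 : |x| ≤ 1 := hx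
    set m := min 2 (2 * (|u| * |x|)) with hmdef
    have hm0 : 0 ≤ m := le_min (by norm_num) (by positivity)
    have h1 : ‖Complex.exp (((R:ℂ) - Complex.I*u)*x) - 1‖
        ≤ Real.exp |R| * m + |R| * |x| * Real.exp |R| := by
      refine (aux_decomp R u x).trans ?_
      have e1 : Real.exp (R*x) ≤ Real.exp |R| := by
        apply Real.exp_le_exp.2
        calc R*x ≤ |R*x| := le_abs_self _
          _ = |R| * |x| := abs_mul _ _
          _ ≤ |R| * 1 := mul_le_mul_of_nonneg_left hx1 (abs_nonneg R)
          _ = |R| := mul_one _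
      have e2 : |Real.exp (R*x) - 1| ≤ |R| * |x| * Real.exp |R| := by
        refine (aux_exp_abs (R*x)).trans ?_
        rw [abs_mul]
        have hRx : |R| * |x| ≤ |R| := by
          calc |R| * |x| ≤ |R| * 1 := mul_le_mul_of_nonneg_left hx1 (abs_nonneg R)
            _ = |R| := mul_one _
        exact mul_le_mul_of_nonneg_left (Real.exp_le_exp.2 hRx) (by positivity)
      have := mul_le_mul_of_nonneg_right e1 hm0
      linarith
    have h2 : ‖Complex.exp (x:ℂ) - 1‖ ≤ |x| * Real.exp 1 := by
      rw [aux_abs2]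
      refine (aux_exp_abs x).trans ?_
      exact mul_le_mul_of_nonneg_left (Real.exp_le_exp.2 hx1) (abs_nonneg x)
    have hmx : m * |x| ≤ 2 * B u * |x| ^ αp := by
      rcases le_or_gt αp 1 with hc | hc
      · have hm2 : m ≤ 2 := min_le_left _ _
        have hxa : |x| ≤ |x| ^ αp := by
          have h := aux_rpow_mono (abs_nonneg x) hx1 hαp0 hc
          rwa [Real.rpow_one] at h
        have hBu : B u = 1 := by rw [hBdef]; simp [hc]
        rw [hBu]
        nlinarith [abs_nonneg x, hm0]
      · have hβ : m ≤ 2 * (|u| * |x|) ^ (αp-1) :=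
          aux_min_rpow (|u| * |x|) (αp-1) (by positivity) (by linarith) (by linarith)
        have hsplit : (|u| * |x|)^(αp-1) = |u|^(αp-1) * |x|^(αp-1) :=
          Real.mul_rpow (abs_nonneg u) (abs_nonneg x)
        have hxx : |x|^(αp-1) * |x| = |x|^αp := by
          have h := Real.rpow_add' (abs_nonneg x) (by linarith : αp - 1 + 1 ≠ 0)
          rw [Real.rpow_one] at h
          rw [← h]; norm_num
        have hBu : B u = 1 + |u|^(αp-1) := by rw [hBdef]; simp [not_le.2 hc]
        have hu0 : 0 ≤ |u|^(αp-1) := Real.rpow_nonneg (abs_nonneg u) _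
        have hx0 : 0 ≤ |x|^(αp-1) := Real.rpow_nonneg (abs_nonneg x) _
        have hxαp : 0 ≤ |x|^αp := Real.rpow_nonneg (abs_nonneg x) _
        rw [hsplit] at hβ
        rw [hBu]
        calc m * |x| ≤ 2 * (|u|^(αp-1) * |x|^(αp-1)) * |x| := by
              exact mul_le_mul_of_nonneg_right hβ (abs_nonneg x)
          _ = 2 * |u|^(αp-1) * (|x|^(αp-1) * |x|) := by ring
          _ = 2 * |u|^(αp-1) * |x|^αp := by rw [hxx]
          _ ≤ 2 * (1 + |u|^(αp-1)) * |x|^αp := by nlinarith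
    have hxx2 : |x| * |x| ≤ B u * |x|^αp := by
      have h2' : |x| * |x| = |x| ^ (2:ℝ) := by
        rw [show ((2:ℝ)) = ((2:ℕ):ℝ) by norm_num, Real.rpow_natCast]; ring
      have h3 := aux_rpow_mono (abs_nonneg x) hx1 hαp0 (le_of_lt hαp2)
      have hxαp : 0 ≤ |x|^αp := Real.rpow_nonneg (abs_nonneg x) _
      calc |x| * |x| = |x| ^ (2:ℝ) := h2'
        _ ≤ |x| ^ αp := h3
        _ = 1 * |x| ^ αp := (one_mul _).symm
        _ ≤ B u * |x| ^ αp := mul_le_mul_of_nonneg_right (hB1 u) hxαp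
    have hprod : ‖f u x‖
        ≤ (Real.exp |R| * m + |R| * |x| * Real.exp |R|) * (|x| * Real.exp 1) := by
      rw [hfdef]
      simp only [norm_mul]
      exact mul_le_mul h1 h2 (norm_nonneg _) (by positivity)
    refine hprod.trans ?_
    rw [hKdef]
    nlinarith [mul_le_mul_of_nonneg_left hmx
        (by positivity : (0:ℝ) ≤ Real.exp |R| * Real.exp 1),
      mul_le_mul_of_nonneg_left hxx2
        (by positivity : (0:ℝ) ≤ |R| * (Real.exp |R| * Real.exp 1)),
      Real.exp_pos |R|, Real.exp_pos 1, abs_nonneg R, hm0, abs_nonneg x]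
  -- integrability on S
  have hfS : ∀ u, IntegrableOn (f u) S ν := by
    intro u
    refine Integrable.mono' (hsmall.const_mul (K * B u))
      ((hfcont u).aestronglyMeasurable) ?_
    refine (ae_restrict_iff' hSmeas).2 (ae_of_all _ fun x hx => ?_)
    rw [hnorm]
    exact hupS u x hx
  by_cases hgT : Integrable g (ν.restrict T)
  · -- main case: everything integrable
    have hconstT : IntegrableOn (fun _ : ℝ => (1:ℝ)) T ν :=
      integrableOn_const hνT.ne
    have hbT : Integrable (fun x => g x + 2*((Real.exp x - 1)^2 + 1)) (ν.restrict T) := by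
      have h1 : Integrable (fun x => (Real.exp x - 1)^2 + 1) (ν.restrict T) :=
        (hAint.restrict (s := T)).add hconstT
      exact hgT.add (h1.const_mul 2)
    have hfT : ∀ u, IntegrableOn (f u) T ν := by
      intro u
      refine Integrable.mono' hbT ((hfcont u).aestronglyMeasurable)
        (ae_of_all _ fun x => ?_)
      rw [hnorm]
      exact hupT u x
    have hfint : ∀ u, Integrable (f u) ν := by
      intro u
      have h := (hfS u).union (hfT u)
      rwa [hST, integrableOn_univ] at h
    set Is : ℝ := ∫ x in S, |x|^αp ∂ν with hIsdef
    have hIs0 : 0 ≤ Is :=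
      integral_nonneg fun x => Real.rpow_nonneg (abs_nonneg x) αp
    set C2 : ℝ := ∫ x in T, (g x + 2*((Real.exp x - 1)^2 + 1)) ∂ν with hC2def
    have hC20 : 0 ≤ C2 := by
      refine integral_nonneg fun x => ?_
      simp only [Pi.zero_apply]
      have := hg0 x
      nlinarith [sq_nonneg (Real.exp x - 1)]
    refine ⟨1/A * (K * Is + C2) + 1, by positivity, fun u => ?_⟩
    have hsplit : (∫ x, f u x ∂ν) = (∫ x in S, f u x ∂ν) + ∫ x in T, f u x ∂ν := by
      rw [← setIntegral_univ, ← hST, setIntegral_union hdisj hTmeas (hfS u) (hfT u)]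
    have hbS : ‖∫ x in S, f u x ∂ν‖ ≤ K * B u * Is := by
      refine (norm_integral_le_integral_norm _).trans ?_
      have h1 : (∫ x in S, ‖f u x‖ ∂ν) ≤ ∫ x in S, K * B u * |x|^αp ∂ν :=
        setIntegral_mono_on ((hfS u).norm) (hsmall.const_mul _) hSmeas
          (fun x hx => by rw [hnorm]; exact hupS u x hx)
      rwa [integral_const_mul] at h1
    have hbT2 : ‖∫ x in T, f u x ∂ν‖ ≤ C2 := by
      refine (norm_integral_le_integral_norm _).trans ?_
      exact setIntegral_mono_on ((hfT u).norm) hbT hTmeas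
        (fun x _ => by rw [hnorm]; exact hupT u x)
    have habsint : ‖∫ x, f u x ∂ν‖ ≤ K * B u * Is + C2 := by
      rw [hsplit]
      exact (norm_add_le _ _).trans (add_le_add hbS hbT2)
    rw [hΥ u]
    rw [norm_mul, Complex.norm_real, Real.norm_eq_abs, abs_of_pos (by positivity : (0:ℝ) < 1/A)]
    have hRHS : (if αp ≤ 1 then 1/A * (K * Is + C2) + 1
        else (1/A * (K * Is + C2) + 1) * (1 + |u| ^ (αp - 1))) = (1/A * (K * Is + C2) + 1) * B u := by
      rw [hBdef]; dsimp only; split_ifs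
      · exact (mul_one _).symm
      · rfl
    rw [hRHS]
    have hstep : 1/A * ‖∫ x, f u x ∂ν‖ ≤ 1/A * (K * B u * Is + C2) :=
      mul_le_mul_of_nonneg_left habsint (by positivity)
    refine hstep.trans ?_
    have hAinv : (0:ℝ) < 1/A := by positivity
    nlinarith [hB1 u, mul_le_mul_of_nonneg_left (hB1 u)
      (by positivity : (0:ℝ) ≤ 1/A * C2), hIs0, hC20, hKpos]
  · -- degenerate case: integrand not integrable, so integral is zero
    refine ⟨1, one_pos, fun u => ?_⟩
    have hnint : ¬ Integrable (f u) ν := by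
      intro hint
      apply hgT
      refine Integrable.mono' ((hint.restrict (s := T)).norm) hgcont.aestronglyMeasurable
        (ae_of_all _ fun x => ?_)
      rw [Real.norm_eq_abs, abs_of_nonneg (hg0 x), hnorm]
      exact hlow u x
    rw [hΥ u]
    rw [show (∫ x : ℝ, (Complex.exp (((R : ℂ) - Complex.I * u) * x) - 1) *
        (Complex.exp (x : ℂ) - 1) ∂ν) = ∫ x, f u x ∂ν from rfl]
    rw [integral_undef hnint, mul_zero, norm_zero]
    split_ifs
    · norm_num
    · positivity
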